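/- Fix n ≥ 0. Let g be the real vector space with basis {X_{4k+1}, X_{4k+2}, X_{4k+3}, X_{4k+4} : 0 ≤ k ≤ n} ∪ {Z_1, Z_2}, equipped with the alternating bilinear bracket whose only nonzero brackets among basis elements are, for each 0 ≤ k ≤ n: [X_{4k+1}, X_{4k+2}] = −Z_1/2, [X_{4k+1}, X_{4k+4}] = −Z_2/2, [X_{4k+2}, X_{4k+3}] = −Z_2/2 (and the brackets obtained by antisymmetry). Then: (1) this bracket satisfies the Jacobi identity and g is a 2-step nilpotent Lie algebra with Z_1, Z_2 central; (2) the linear map J determined by JX_{4k+1} = X_{4k+2}, JX_{4k+2} = −X_{4k+1}, JX_{4k+3} = −X_{4k+4}, JX_{4k+4} = X_{4k+3}, JZ_1 = −Z_2, JZ_2 = Z_1 is an abelian complex structure; (3) setting in g_ℂ the elements W = (Z_1 + iZ_2)/2, T_{2k+1} = (X_{4k+1} − iX_{4k+2})/2, T_{2k+2} = (X_{4k+3} + iX_{4k+4})/2 together with their conjugates W̄ = (Z_1 − iZ_2)/2, T̄_{2k+1} = (X_{4k+1} + iX_{4k+2})/2, T̄_{2k+2} = (X_{4k+3} − iX_{4k+4})/2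 (forming a ℂ-basis of g_ℂ), and letting ρ : g_ℂ → ℂ be the functional with ρ(W) = 1 and ρ = 0 on all other basis elements, the pairing span_ℂ{T_1, …, T_{2n+2}} × span_ℂ{T̄_1, …, T̄_{2n+2}} → ℂ given by (T, S) ↦ ρ([T, S]) is non-degenerate. -/

import Mathlib

/-! **Statement 15.** The algebra `P` of Example 4: it is a 2-step nilpotent Lie
algebra with `Z_1, Z_2` central, it carries an abelian complex structure `J`, and the
pairing induced by `dρ` on the complexification is non-degenerate. -/

namespace ExampleFour

noncomputable section

/-- The underlying vector space over a field `K`: for each `0 ≤ k ≤ n` the four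
coordinates of `X_{4k+1}, X_{4k+2}, X_{4k+3}, X_{4k+4}`, plus those of `Z_1, Z_2`. -/
abbrev G (K : Type) (n : ℕ) := (Fin (n + 1) → K × K × K × K) × K × K

variable {K : Type} [Field K] {n : ℕ}

/-- The standard basis of `K × K × K × K`. -/
def e : Fin 4 → K × K × K × K := ![(1, 0, 0, 0), (0, 1, 0, 0), (0, 0, 1, 0), (0, 0, 0, 1)]

/-- The basis vector `X_{4k+1+i}` (for `i : Fin 4`). -/
def X (k : Fin (n + 1)) (i : Fin 4) : G K n := (Pi.single k (e i), 0, 0)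

/-- The basis vector `Z_1`. -/
def Z1 : G K n := (0, 1, 0)

/-- The basis vector `Z_2`. -/
def Z2 : G K n := (0, 0, 1)

/-- Coefficients of `Z_1` in the brackets `[X_{4k+1+i}, X_{4k+1+j}]`:
`[X_{4k+1}, X_{4k+2}] = -Z_1/2`. -/
def c (K : Type) [Field K] : Matrix (Fin 4) (Fin 4) K :=
  !![0, -(1 / 2), 0, 0; 1 / 2, 0, 0, 0; 0, 0, 0, 0; 0, 0, 0, 0]

/-- Coefficients of `Z_2` in the brackets `[X_{4k+1+i}, X_{4k+1+j}]`:
`[X_{4k+1}, X_{4k+4}] = -Z_2/2`, `[X_{4k+2}, X_{4k+3}] = -Z_2/2`. -/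
def d (K : Type) [Field K] : Matrix (Fin 4) (Fin 4) K :=
  !![0, 0, 0, -(1 / 2); 0, 0, -(1 / 2), 0; 0, 1 / 2, 0, 0; 1 / 2, 0, 0, 0]

/-- `br` is the (necessarily unique) `K`-bilinear bracket whose only nonzero values on
basis elements are, for each `k`: `[X_{4k+1}, X_{4k+2}] = -Z_1/2`,
`[X_{4k+1}, X_{4k+4}] = -Z_2/2`, `[X_{4k+2}, X_{4k+3}] = -Z_2/2` (and the brackets
obtained by antisymmetry). -/
def IsExampleFourBracket (br : G K n →ₗ[K] G K n →ₗ[K] G K n) : Prop :=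
  (∀ (k l : Fin (n + 1)) (i j : Fin 4),
    br (X k i) (X l j) = if k = l then c K i j • Z1 + d K i j • Z2 else 0) ∧
  (∀ (k : Fin (n + 1)) (i : Fin 4), br (X k i) Z1 = 0 ∧ br Z1 (X k i) = 0 ∧
    br (X k i) Z2 = 0 ∧ br Z2 (X k i) = 0) ∧
  (br (Z1 : G K n) Z1 = 0 ∧ br (Z1 : G K n) Z2 = 0 ∧ br (Z2 : G K n) Z1 = 0 ∧
    br (Z2 : G K n) Z2 = 0)

/-- `W = (Z_1 + iZ_2)/2` in the complexification. -/
def W : G ℂ n := (0, 1 / 2, Complex.I / 2)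
/-- `W̄ = (Z_1 - iZ_2)/2`. -/
def Wb : G ℂ n := (0, 1 / 2, -(Complex.I / 2))
/-- `T_{2k+1} = (X_{4k+1} - iX_{4k+2})/2`. -/
def Todd (k : Fin (n + 1)) : G ℂ n := (Pi.single k (1 / 2, -(Complex.I / 2), 0, 0), 0, 0)
/-- `T_{2k+2} = (X_{4k+3} + iX_{4k+4})/2`. -/
def Teven (k : Fin (n + 1)) : G ℂ n := (Pi.single k (0, 0, 1 / 2, Complex.I / 2), 0, 0)
/-- `T̄_{2k+1} = (X_{4k+1} + iX_{4k+2})/2`. -/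
def Tbodd (k : Fin (n + 1)) : G ℂ n := (Pi.single k (1 / 2, Complex.I / 2, 0, 0), 0, 0)
/-- `T̄_{2k+2} = (X_{4k+3} - iX_{4k+4})/2`. -/
def Tbeven (k : Fin (n + 1)) : G ℂ n := (Pi.single k (0, 0, 1 / 2, -(Complex.I / 2)), 0, 0)

/-! ### Auxiliary lemmas -/

/-- Coordinates of `u` in the `X` part of the basis. -/
def cf (u : G K n) (k : Fin (n + 1)) : Fin 4 → K :=
  ![(u.1 k).1, (u.1 k).2.1, (u.1 k).2.2.1, (u.1 k).2.2.2]

lemma repr (u : G K n) :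
    u = (∑ k, ∑ i, cf u k i • X k i) + u.2.1 • Z1 + u.2.2 • Z2 := by
  refine Prod.ext ?_ (Prod.ext ?_ ?_)
  · funext l
    simp [X, Z1, Z2, cf, e, Fin.sum_univ_four, Prod.fst_sum, Finset.sum_apply,
      Pi.single_apply, Finset.sum_add_distrib, Finset.sum_ite_eq', Prod.smul_mk,
      Prod.mk_add_mk, Prod.ext_iff]
  · simp [X, Z1, Z2, Prod.snd_sum, Prod.fst_sum]
  · simp [X, Z1, Z2, Prod.snd_sum, Prod.fst_sum]

lemma lmap_sum {M N : Type*} [AddCommMonoid M] [AddCommMonoid N] [Module K M]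
    [Module K N] (f : M →ₗ[K] N) {ι : Type*} (s : Finset ι) (g : ι → M) :
    f (∑ i ∈ s, g i) = ∑ i ∈ s, f (g i) := by
  classical
  induction s using Finset.induction with
  | empty => simpa using f.map_zero
  | insert _ _ h ih => rw [Finset.sum_insert h, Finset.sum_insert h, f.map_add, ih]

/-- Coefficient of `Z1` in the bracket. -/
def F1 (u v : G K n) : K :=
  ∑ k, ((1 / 2) * ((u.1 k).2.1 * (v.1 k).1) - (1 / 2) * ((u.1 k).1 * (v.1 k).2.1))

/-- Coefficient of `Z2` in the bracket. -/
def F2 (u v : G K n) : K :=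
  ∑ k, ((1 / 2) * ((u.1 k).2.2.1 * (v.1 k).2.1) + (1 / 2) * ((u.1 k).2.2.2 * (v.1 k).1)
      - (1 / 2) * ((u.1 k).1 * (v.1 k).2.2.2) - (1 / 2) * ((u.1 k).2.1 * (v.1 k).2.2.1))

lemma br_eq {br : G K n →ₗ[K] G K n →ₗ[K] G K n} (h : IsExampleFourBracket br)
    (u v : G K n) : br u v = (0, F1 u v, F2 u v) := by
  obtain ⟨hXX, hXZ, hZZ⟩ := h
  conv_lhs => rw [repr u, repr v]
  simp only [LinearMap.map_add, lmap_sum, LinearMap.map_smul, LinearMap.add_apply,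
    LinearMap.smul_apply, LinearMap.sum_apply, hXX, (hXZ _ _).1, (hXZ _ _).2.1,
    (hXZ _ _).2.2.1, (hXZ _ _).2.2.2, hZZ.1, hZZ.2.1, hZZ.2.2.1, hZZ.2.2.2,
    smul_zero, add_zero, zero_add, Finset.sum_const_zero,
    smul_ite, Finset.sum_ite_eq', Finset.mem_univ, if_true]
  simp only [Finset.sum_ite_irrel, Finset.sum_const_zero, Finset.sum_ite_eq,
    Finset.mem_univ, if_true]
  refine Prod.ext ?_ (Prod.ext ?_ ?_)
  · simp [Prod.fst_sum, Z1, Z2, Fin.sum_univ_four, c, d, cf, e, Matrix.vecHead,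
      Matrix.vecTail, smul_smul, Prod.smul_mk]
  · simp only [Prod.snd_sum, Prod.fst_sum, F1]
    refine Finset.sum_congr rfl fun x _ => ?_
    simp [Z1, Z2, Fin.sum_univ_four, c, d, cf, e, Matrix.vecHead, Matrix.vecTail,
      smul_smul, Prod.smul_mk]
    ring
  · simp only [Prod.snd_sum, F2]
    refine Finset.sum_congr rfl fun x _ => ?_
    simp [Z1, Z2, Fin.sum_univ_four, c, d, cf, e, Matrix.vecHead, Matrix.vecTail,
      smul_smul, Prod.smul_mk]
    ring

lemma br_zero_left {br : G K n →ₗ[K] G K n →ₗ[K] G K n} (h : IsExampleFourBracket br)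
    {u : G K n} (hu : u.1 = 0) (v : G K n) : br u v = 0 := by
  rw [br_eq h]
  refine Prod.ext ?_ (Prod.ext ?_ ?_) <;> simp [F1, F2, hu]

lemma br_zero_right {br : G K n →ₗ[K] G K n →ₗ[K] G K n} (h : IsExampleFourBracket br)
    {v : G K n} (hv : v.1 = 0) (u : G K n) : br u v = 0 := by
  rw [br_eq h]
  refine Prod.ext ?_ (Prod.ext ?_ ?_) <;> simp [F1, F2, hv]

lemma J_eq (J : G ℝ n →ₗ[ℝ] G ℝ n)
    (hJ1 : ∀ k, J (X k 0) = X k 1) (hJ2 : ∀ k, J (X k 1) = -X k 0)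
    (hJ3 : ∀ k, J (X k 2) = -X k 3) (hJ4 : ∀ k, J (X k 3) = X k 2)
    (hJZ1 : J (Z1 : G ℝ n) = -Z2) (hJZ2 : J (Z2 : G ℝ n) = Z1) (u : G ℝ n) :
    J u = (fun k => (-(u.1 k).2.1, (u.1 k).1, (u.1 k).2.2.2, -(u.1 k).2.2.1),
      u.2.2, -u.2.1) := by
  conv_lhs => rw [repr u]
  simp only [LinearMap.map_add, lmap_sum, LinearMap.map_smul, Fin.sum_univ_four,
    hJ1, hJ2, hJ3, hJ4, hJZ1, hJZ2]
  refine Prod.ext ?_ (Prod.ext ?_ ?_)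
  · funext l
    simp [X, Z1, Z2, cf, e, Prod.fst_sum, Finset.sum_apply, Pi.single_apply,
      Finset.sum_add_distrib, Finset.sum_ite_eq', Prod.smul_mk, Prod.mk_add_mk,
      Prod.ext_iff, smul_ite]
  · simp [X, Z1, Z2, Prod.snd_sum, Prod.fst_sum]
  · simp [X, Z1, Z2, Prod.snd_sum, Prod.fst_sum]

lemma F1_single_right (u : G ℂ n) (l : Fin (n + 1)) (a : ℂ × ℂ × ℂ × ℂ) :
    F1 u ((Pi.single l a, 0, 0) : G ℂ n)
      = (1 / 2) * ((u.1 l).2.1 * a.1) - (1 / 2) * ((u.1 l).1 * a.2.1) := by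
  rw [F1]
  refine (Finset.sum_eq_single l (fun b _ hb => by simp [Pi.single_eq_of_ne hb])
    (by simp)).trans (by simp)

lemma F2_single_right (u : G ℂ n) (l : Fin (n + 1)) (a : ℂ × ℂ × ℂ × ℂ) :
    F2 u ((Pi.single l a, 0, 0) : G ℂ n)
      = (1 / 2) * ((u.1 l).2.2.1 * a.2.1) + (1 / 2) * ((u.1 l).2.2.2 * a.1)
        - (1 / 2) * ((u.1 l).1 * a.2.2.2) - (1 / 2) * ((u.1 l).2.1 * a.2.2.1) := by
  rw [F2]
  refine (Finset.sum_eq_single l (fun b _ hb => by simp [Pi.single_eq_of_ne hb])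
    (by simp)).trans (by simp)

lemma F1_single_left (v : G ℂ n) (l : Fin (n + 1)) (a : ℂ × ℂ × ℂ × ℂ) :
    F1 ((Pi.single l a, 0, 0) : G ℂ n) v
      = (1 / 2) * (a.2.1 * (v.1 l).1) - (1 / 2) * (a.1 * (v.1 l).2.1) := by
  rw [F1]
  refine (Finset.sum_eq_single l (fun b _ hb => by simp [Pi.single_eq_of_ne hb])
    (by simp)).trans (by simp)

lemma F2_single_left (v : G ℂ n) (l : Fin (n + 1)) (a : ℂ × ℂ × ℂ × ℂ) :
    F2 ((Pi.single l a, 0, 0) : G ℂ n) v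
      = (1 / 2) * (a.2.2.1 * (v.1 l).2.1) + (1 / 2) * (a.2.2.2 * (v.1 l).1)
        - (1 / 2) * (a.1 * (v.1 l).2.2.2) - (1 / 2) * (a.2.1 * (v.1 l).2.2.1) := by
  rw [F2]
  refine (Finset.sum_eq_single l (fun b _ hb => by simp [Pi.single_eq_of_ne hb])
    (by simp)).trans (by simp)

lemma mem_span_T {u : G ℂ n}
    (hu : u ∈ Submodule.span ℂ (Set.range (Todd (n := n)) ∪ Set.range Teven)) :
    u.2.1 = 0 ∧ u.2.2 = 0 ∧ ∀ k, (u.1 k).2.1 = -Complex.I * (u.1 k).1 ∧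
      (u.1 k).2.2.2 = Complex.I * (u.1 k).2.2.1 := by
  induction hu using Submodule.span_induction with
  | mem x hx =>
    rcases hx with ⟨l, rfl⟩ | ⟨l, rfl⟩ <;>
    · refine ⟨rfl, rfl, fun k => ?_⟩
      by_cases hk : k = l <;>
        simp [Todd, Teven, hk, Pi.single_eq_of_ne, Pi.single_eq_same] <;> ring
  | zero => simp
  | add x y hx hy ihx ihy =>
    exact ⟨by simp [ihx.1, ihy.1], by simp [ihx.2.1, ihy.2.1], fun k => by
      constructor <;> simp [(ihx.2.2 k).1, (ihy.2.2 k).1, (ihx.2.2 k).2,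
        (ihy.2.2 k).2] <;> ring⟩
  | smul a x hx ihx =>
    exact ⟨by simp [ihx.1], by simp [ihx.2.1], fun k => by
      constructor <;> simp [(ihx.2.2 k).1, (ihx.2.2 k).2] <;> ring⟩

lemma mem_span_Tb {v : G ℂ n}
    (hv : v ∈ Submodule.span ℂ (Set.range (Tbodd (n := n)) ∪ Set.range Tbeven)) :
    v.2.1 = 0 ∧ v.2.2 = 0 ∧ ∀ k, (v.1 k).2.1 = Complex.I * (v.1 k).1 ∧
      (v.1 k).2.2.2 = -Complex.I * (v.1 k).2.2.1 := by
  induction hv using Submodule.span_induction with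
  | mem x hx =>
    rcases hx with ⟨l, rfl⟩ | ⟨l, rfl⟩ <;>
    · refine ⟨rfl, rfl, fun k => ?_⟩
      by_cases hk : k = l <;>
        simp [Tbodd, Tbeven, hk, Pi.single_eq_of_ne, Pi.single_eq_same] <;> ring
  | zero => simp
  | add x y hx hy ihx ihy =>
    exact ⟨by simp [ihx.1, ihy.1], by simp [ihx.2.1, ihy.2.1], fun k => by
      constructor <;> simp [(ihx.2.2 k).1, (ihy.2.2 k).1, (ihx.2.2 k).2,
        (ihy.2.2 k).2] <;> ring⟩
  | smul a x hx ihx =>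
    exact ⟨by simp [ihx.1], by simp [ihx.2.1], fun k => by
      constructor <;> simp [(ihx.2.2 k).1, (ihx.2.2 k).2] <;> ring⟩

/-- Main statement for the algebra of Example 4. -/
theorem exampleFour_main
    (n : ℕ)
    -- the real Lie bracket
    (br : G ℝ n →ₗ[ℝ] G ℝ n →ₗ[ℝ] G ℝ n) (hbr : IsExampleFourBracket br)
    -- the complex structure `J`
    (J : G ℝ n →ₗ[ℝ] G ℝ n)
    (hJ1 : ∀ k, J (X k 0) = X k 1) (hJ2 : ∀ k, J (X k 1) = -X k 0)
    (hJ3 : ∀ k, J (X k 2) = -X k 3) (hJ4 : ∀ k, J (X k 3) = X k 2)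
    (hJZ1 : J (Z1 : G ℝ n) = -Z2) (hJZ2 : J (Z2 : G ℝ n) = Z1)
    -- the ℂ-bilinear extension of the bracket to `g_ℂ`
    (brc : G ℂ n →ₗ[ℂ] G ℂ n →ₗ[ℂ] G ℂ n) (hbrc : IsExampleFourBracket brc)
    -- the functional `ρ` with `ρ W = 1`, vanishing on the other basis elements
    (ρ : G ℂ n →ₗ[ℂ] ℂ)
    (hρW : ρ W = 1) (hρWb : ρ Wb = 0)
    (hρT : ∀ k, ρ (Todd k) = 0 ∧ ρ (Teven k) = 0 ∧ ρ (Tbodd k) = 0 ∧ ρ (Tbeven k) = 0) :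
    -- (1) `g` is a 2-step nilpotent Lie algebra with `Z_1, Z_2` central
    ((∀ u : G ℝ n, br u u = 0) ∧
     (∀ u v w : G ℝ n, br (br u v) w + br (br v w) u + br (br w u) v = 0) ∧
     (∀ u v w : G ℝ n, br (br u v) w = 0) ∧
     (∀ v : G ℝ n, br Z1 v = 0 ∧ br v Z1 = 0 ∧ br Z2 v = 0 ∧ br v Z2 = 0)) ∧
    -- (2) `J` is an abelian complex structure
    ((∀ u : G ℝ n, J (J u) = -u) ∧
     (∀ u v : G ℝ n, br (J u) (J v) = br u v)) ∧
    -- (3) the pairing `(T, S) ↦ ρ ⁅T, S⁆` between `span {T_1, …, T_{2n+2}}` and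
    --     `span {T̄_1, …, T̄_{2n+2}}` is non-degenerate
    ((∀ u ∈ Submodule.span ℂ (Set.range (Todd (n := n)) ∪ Set.range Teven),
        (∀ v ∈ Submodule.span ℂ (Set.range (Tbodd (n := n)) ∪ Set.range Tbeven),
          ρ (brc u v) = 0) → u = 0) ∧
     (∀ v ∈ Submodule.span ℂ (Set.range (Tbodd (n := n)) ∪ Set.range Tbeven),
        (∀ u ∈ Submodule.span ℂ (Set.range (Todd (n := n)) ∪ Set.range Teven),
          ρ (brc u v) = 0) → v = 0)) := by
  have hstep : ∀ u v w : G ℝ n, br (br u v) w = 0 := fun u v w =>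
    br_zero_left hbr (by rw [br_eq hbr]) w
  have hJexp := J_eq J hJ1 hJ2 hJ3 hJ4 hJZ1 hJZ2
  -- values of ρ on Z1, Z2
  have hZ1W : (Z1 : G ℂ n) = W + Wb := by
    refine Prod.ext ?_ (Prod.ext ?_ ?_) <;> simp [Z1, W, Wb] <;> ring
  have hZ2W : (Z2 : G ℂ n) = (-Complex.I) • W + Complex.I • Wb := by
    refine Prod.ext ?_ (Prod.ext ?_ ?_) <;>
      simp [Z2, W, Wb, Complex.ext_iff] <;> ring
  have hρZ1 : ρ (Z1 : G ℂ n) = 1 := by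
    rw [hZ1W, ρ.map_add, hρW, hρWb]; ring
  have hρZ2 : ρ (Z2 : G ℂ n) = -Complex.I := by
    rw [hZ2W, ρ.map_add, ρ.map_smul, ρ.map_smul, hρW, hρWb]
    simp
  have hρbr : ∀ u v : G ℂ n, ρ (brc u v) = F1 u v - Complex.I * F2 u v := by
    intro u v
    have h0 : ((0, F1 u v, F2 u v) : G ℂ n) = F1 u v • Z1 + F2 u v • Z2 := by
      refine Prod.ext ?_ (Prod.ext ?_ ?_) <;> simp [Z1, Z2]
    rw [br_eq hbrc, h0, ρ.map_add, ρ.map_smul, ρ.map_smul, hρZ1, hρZ2]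
    simp [smul_eq_mul]; ring
  refine ⟨⟨?_, ?_, hstep, ?_⟩, ⟨?_, ?_⟩, ?_, ?_⟩
  · -- alternating
    intro u
    rw [br_eq hbr]
    refine Prod.ext rfl (Prod.ext ?_ ?_)
    · show F1 u u = (0 : G ℝ n).2.1
      exact Finset.sum_eq_zero fun x _ => by ring
    · show F2 u u = (0 : G ℝ n).2.2
      exact Finset.sum_eq_zero fun x _ => by ring
  · intro u v w
    simp [hstep]
  · -- center
    intro v
    have h1 : (Z1 : G ℝ n).1 = 0 := rfl
    have h2 : (Z2 : G ℝ n).1 = 0 := rfl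
    exact ⟨br_zero_left hbr h1 v, br_zero_right hbr h1 v,
      br_zero_left hbr h2 v, br_zero_right hbr h2 v⟩
  · -- J ∘ J = -1
    intro u
    rw [hJexp u, hJexp]
    refine Prod.ext (funext fun k => ?_) (Prod.ext (by simp) (by simp))
    simp [Prod.ext_iff, Pi.neg_apply]
  · -- abelian
    intro u v
    rw [hJexp u, hJexp v, br_eq hbr, br_eq hbr]
    refine Prod.ext rfl (Prod.ext ?_ ?_) <;>
      · simp only [F1, F2]
        refine Finset.sum_congr rfl fun x _ => ?_
        simp
        ring
  · -- non-degeneracy, left slot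
    intro u hu hp
    obtain ⟨h21, h22, hrel⟩ := mem_span_T hu
    have hbo : ∀ l, ρ (brc u (Tbodd l)) = 0 := fun l =>
      hp _ (Submodule.subset_span (Set.mem_union_left _ ⟨l, rfl⟩))
    have hbe : ∀ l, ρ (brc u (Tbeven l)) = 0 := fun l =>
      hp _ (Submodule.subset_span (Set.mem_union_right _ ⟨l, rfl⟩))
    have h0 : ∀ l, (u.1 l).1 = 0 := by
      intro l
      have h := hbe l
      rw [hρbr, Tbeven, F1_single_right, F2_single_right] at h
      simp only at h
      have hr := (hrel l).1
      linear_combination (2:ℂ) * h - (Complex.I/2) * hr + (u.1 l).1 * Complex.I_sq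
    have h1 : ∀ l, (u.1 l).2.1 = 0 := fun l => by rw [(hrel l).1, h0 l, mul_zero]
    have h2 : ∀ l, (u.1 l).2.2.1 = 0 := by
      intro l
      have h := hbo l
      rw [hρbr, Tbodd, F1_single_right, F2_single_right] at h
      simp only at h
      have hr := (hrel l).2
      rw [h0 l, h1 l] at h
      have hr := (hrel l).2
      linear_combination (2:ℂ) * h + (Complex.I/2) * hr
        + (u.1 l).2.2.1 * Complex.I_sq
    have h3 : ∀ l, (u.1 l).2.2.2 = 0 := fun l => by rw [(hrel l).2, h2 l, mul_zero]
    refine Prod.ext (funext fun l => ?_) (Prod.ext h21 h22)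
    exact Prod.ext (h0 l) (Prod.ext (h1 l) (Prod.ext (h2 l) (h3 l)))
  · -- non-degeneracy, right slot
    intro v hv hp
    obtain ⟨h21, h22, hrel⟩ := mem_span_Tb hv
    have hbo : ∀ l, ρ (brc (Todd l) v) = 0 := fun l =>
      hp _ (Submodule.subset_span (Set.mem_union_left _ ⟨l, rfl⟩))
    have hbe : ∀ l, ρ (brc (Teven l) v) = 0 := fun l =>
      hp _ (Submodule.subset_span (Set.mem_union_right _ ⟨l, rfl⟩))
    have h0 : ∀ l, (v.1 l).1 = 0 := by
      intro l
      have h := hbe l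
      rw [hρbr, Teven, F1_single_left, F2_single_left] at h
      simp only at h
      have hr := (hrel l).1
      linear_combination (2:ℂ) * h + (Complex.I/2) * hr + (v.1 l).1 * Complex.I_sq
    have h1 : ∀ l, (v.1 l).2.1 = 0 := fun l => by rw [(hrel l).1, h0 l, mul_zero]
    have h2 : ∀ l, (v.1 l).2.2.1 = 0 := by
      intro l
      have h := hbo l
      rw [hρbr, Todd, F1_single_left, F2_single_left] at h
      simp only at h
      rw [h0 l, h1 l] at h
      have hr := (hrel l).2
      linear_combination (2:ℂ) * h - (Complex.I/2) * hr
        + (v.1 l).2.2.1 * Complex.I_sq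
    have h3 : ∀ l, (v.1 l).2.2.2 = 0 := fun l => by rw [(hrel l).2, h2 l, mul_zero]
    refine Prod.ext (funext fun l => ?_) (Prod.ext h21 h22)
    exact Prod.ext (h0 l) (Prod.ext (h1 l) (Prod.ext (h2 l) (h3 l)))

end

end ExampleFour
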